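/- arXiv:1911.08830 — 4 statements merged into one kernel-verified Lean document; each statement's English description precedes it below -/
import Mathlib

section
/- Let p ≥ 1 and T ≥ 2 be integers, let a > 1, and let q : ([0,1]^p)^T → ℝ be a measurable probability density with respect to Lebesgue measure on ([0,1]^p)^T satisfying a⁻¹ ≤ q(w) ≤ a for all w. Then for every square-integrable g : [0,1]^p → ℝ, (1/(2a))·‖g‖₂² ≤ ∫_{([0,1]^p)^T} V_T(g)(w)·q(w) dw ≤ a·‖g‖₂². -/
open MeasureTheory

/-- The unit cube [0,1]^p. -/
def unitBox (p : ℕ) : Set (Fin p → ℝ) := Set.univ.pi fun _ => Set.Icc (0:ℝ) 1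

/-- The T-fold product ([0,1]^p)^T of unit cubes. -/
def unitBoxT (p T : ℕ) : Set (Fin T → (Fin p → ℝ)) := Set.univ.pi fun _ => unitBox p

/-- The centered sample variance V_T(g)(w) = (1/T)·Σ_t (g(w_t) − (1/T)Σ_s g(w_s))². -/
noncomputable def sampleVar (p T : ℕ) (g : (Fin p → ℝ) → ℝ)
    (w : Fin T → (Fin p → ℝ)) : ℝ :=
  (1 / (T : ℝ)) * ∑ t, (g (w t) - (1 / (T : ℝ)) * ∑ s, g (w s)) ^ 2

section Aux

variable {E : Type*} [MeasurableSpace E]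

/-- Integral of a function of one coordinate under a product of probability measures. -/
lemma aux_single (μ : Measure E) [IsProbabilityMeasure μ]
    {F : E → ℝ} (hF : Integrable F μ) (T : ℕ) (t : Fin T) :
    Integrable (fun w : Fin T → E => F (w t)) (Measure.pi fun _ => μ) ∧
      ∫ w, F (w t) ∂(Measure.pi fun _ => μ) = ∫ z, F z ∂μ := by
  classical
  letI : MeasureSpace E := ⟨μ⟩
  haveI : IsProbabilityMeasure (volume : Measure E) := ‹IsProbabilityMeasure μ›
  have hveq : (volume : Measure E) = μ := rfl
  set f : Fin T → E → ℝ := fun i z => if i = t then F z else 1 with hf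
  have hfi : ∀ i, Integrable (f i) volume := by
    intro i
    by_cases h : i = t <;> simp [hf, h, hveq, hF, integrable_const]
  have hprod : (fun w : Fin T → E => F (w t)) = fun w => ∏ i, f i (w i) := by
    funext w
    simp only [hf]
    rw [Finset.prod_ite_eq' Finset.univ t (fun i => F (w i))]
    simp
  have hint : Integrable (fun w : Fin T → E => ∏ i, f i (w i))
      (volume : Measure (Fin T → E)) := Integrable.fintype_prod hfi
  have hval : (∫ w : Fin T → E, ∏ i, f i (w i)) = ∫ z, F z ∂μ := by
    rw [MeasureTheory.integral_fintype_prod_volume_eq_prod (ι := Fin T) f]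
    have h1 : ∀ i, (∫ z, f i z) = if i = t then (∫ z, F z ∂μ) else 1 := by
      intro i
      by_cases h : i = t <;> simp [hf, h, hveq]
    rw [Finset.prod_congr rfl fun i _ => h1 i,
      Finset.prod_ite_eq' Finset.univ t (fun _ => ∫ z, F z ∂μ)]
    simp
  constructor
  · rw [hprod]; exact hint
  · rw [hprod]; exact hval

/-- Integral of a product of functions of two distinct coordinates under a product of
probability measures. -/
lemma aux_pair (μ : Measure E) [IsProbabilityMeasure μ]
    {F G : E → ℝ} (hF : Integrable F μ) (hG : Integrable G μ) (T : ℕ) {s t : Fin T}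
    (hst : s ≠ t) :
    Integrable (fun w : Fin T → E => F (w s) * G (w t)) (Measure.pi fun _ => μ) ∧
      ∫ w, F (w s) * G (w t) ∂(Measure.pi fun _ => μ) = (∫ z, F z ∂μ) * ∫ z, G z ∂μ := by
  classical
  letI : MeasureSpace E := ⟨μ⟩
  haveI : IsProbabilityMeasure (volume : Measure E) := ‹IsProbabilityMeasure μ›
  have hveq : (volume : Measure E) = μ := rfl
  set f : Fin T → E → ℝ := fun i z => if i = s then F z else if i = t then G z else 1 with hf
  have hfi : ∀ i, Integrable (f i) volume := by
    intro i
    by_cases h1 : i = s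
    · simpa [hf, h1, hveq] using hF
    · by_cases h2 : i = t <;>
        simp [hf, h1, h2, hveq, hG, (show t ≠ s from hst.symm), integrable_const]
  have htmem : t ∈ Finset.univ.erase s := Finset.mem_erase.2 ⟨hst.symm, Finset.mem_univ t⟩
  have hsplit : ∀ (c : Fin T → ℝ) (A B : ℝ), c s = A → c t = B →
      (∀ i, i ≠ s → i ≠ t → c i = 1) → ∏ i, c i = A * B := by
    intro c A B hA hB h1
    have hrest : ∏ i ∈ (Finset.univ.erase s).erase t, c i = 1 := by
      apply Finset.prod_eq_one
      intro i hi
      rcases Finset.mem_erase.1 hi with ⟨hit, hi2⟩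
      exact h1 i (Finset.mem_erase.1 hi2).1 hit
    rw [← Finset.mul_prod_erase Finset.univ c (Finset.mem_univ s),
      ← Finset.mul_prod_erase _ c htmem, hrest, mul_one, hA, hB]
  have hprod : (fun w : Fin T → E => F (w s) * G (w t)) = fun w => ∏ i, f i (w i) := by
    funext w
    refine (hsplit (fun i => f i (w i)) _ _ ?_ ?_ ?_).symm
    · simp [hf]
    · simp [hf, (show t ≠ s from hst.symm)]
    · intro i h1 h2; simp [hf, h1, h2]
  have hint : Integrable (fun w : Fin T → E => ∏ i, f i (w i))
      (volume : Measure (Fin T → E)) := Integrable.fintype_prod hfi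
  have hval : (∫ w : Fin T → E, ∏ i, f i (w i)) = (∫ z, F z ∂μ) * ∫ z, G z ∂μ := by
    rw [MeasureTheory.integral_fintype_prod_volume_eq_prod (ι := Fin T) f]
    refine hsplit (fun i => ∫ z, f i z) _ _ ?_ ?_ ?_
    · simp [hf, hveq]
    · simp [hf, hveq, (show t ≠ s from hst.symm)]
    · intro i h1 h2; simp [hf, h1, h2]
  constructor
  · rw [hprod]; exact hint
  · rw [hprod]; exact hval

/-- The expected centered sample variance under a product of probability measures. -/
lemma aux_var (μ : Measure E) [IsProbabilityMeasure μ]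
    {g : E → ℝ} (hg1 : Integrable g μ) (hg2 : Integrable (fun z => g z ^ 2) μ)
    (T : ℕ) (hT : 2 ≤ T) :
    Integrable (fun w : Fin T → E =>
        (1 / (T : ℝ)) * ∑ t, (g (w t) - (1 / (T : ℝ)) * ∑ s, g (w s)) ^ 2)
      (Measure.pi fun _ => μ) ∧
      ∫ w : Fin T → E, (1 / (T : ℝ)) * ∑ t, (g (w t) - (1 / (T : ℝ)) * ∑ s, g (w s)) ^ 2
          ∂(Measure.pi fun _ => μ)
        = (1 - 1 / (T : ℝ)) * ((∫ z, g z ^ 2 ∂μ) - (∫ z, g z ∂μ) ^ 2) := by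
  classical
  have hT0 : (0 : ℝ) < (T : ℝ) := by
    have : (0 : ℕ) < T := by omega
    exact_mod_cast this
  have hTne : (T : ℝ) ≠ 0 := ne_of_gt hT0
  set ν : Measure (Fin T → E) := Measure.pi fun _ => μ with hν
  set m1 : ℝ := ∫ z, g z ∂μ with hm1
  set m2 : ℝ := ∫ z, g z ^ 2 ∂μ with hm2
  -- pointwise identity
  have hpt : (fun w : Fin T → E =>
      (1 / (T : ℝ)) * ∑ t, (g (w t) - (1 / (T : ℝ)) * ∑ s, g (w s)) ^ 2)
      = fun w => (1 / (T : ℝ)) * ∑ t, g (w t) ^ 2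
          - (1 / (T : ℝ) ^ 2) * ∑ s, ∑ t, g (w s) * g (w t) := by
    funext w
    have hdd : ∑ s, ∑ t, g (w s) * g (w t) = (∑ s, g (w s)) * (∑ t, g (w t)) :=
      (Finset.sum_mul_sum Finset.univ Finset.univ (fun s => g (w s)) (fun t => g (w t))).symm
    set S : ℝ := ∑ s, g (w s) with hS
    have hexp : ∑ t, (g (w t) - (1 / (T : ℝ)) * S) ^ 2
        = (∑ t, g (w t) ^ 2) - 2 * ((1 / (T : ℝ)) * S) * S + (T : ℝ) * ((1 / (T : ℝ)) * S) ^ 2 := by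
      have h1 : ∀ t : Fin T, (g (w t) - (1 / (T : ℝ)) * S) ^ 2
          = g (w t) ^ 2 - 2 * ((1 / (T : ℝ)) * S) * g (w t) + ((1 / (T : ℝ)) * S) ^ 2 := by
        intro t; ring
      rw [Finset.sum_congr rfl fun t _ => h1 t]
      rw [Finset.sum_add_distrib, Finset.sum_sub_distrib, ← Finset.mul_sum, ← hS,
        Finset.sum_const, Finset.card_univ, Fintype.card_fin, nsmul_eq_mul]
    rw [hexp, hdd]
    field_simp
    ring
  -- integrability and value of each piece
  have hA : Integrable (fun w : Fin T → E => (1 / (T : ℝ)) * ∑ t, g (w t) ^ 2) ν := by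
    refine Integrable.const_mul ?_ _
    exact integrable_finset_sum _ fun t _ => (aux_single μ hg2 T t).1
  have hpair : ∀ s t : Fin T, Integrable (fun w : Fin T → E => g (w s) * g (w t)) ν := by
    intro s t
    by_cases h : s = t
    · subst h
      have : (fun w : Fin T → E => g (w s) * g (w s)) = fun w => g (w s) ^ 2 := by
        funext w; ring
      rw [this]
      exact (aux_single μ hg2 T s).1
    · exact (aux_pair μ hg1 hg1 T h).1
  have hpairval : ∀ s t : Fin T,
      ∫ w, g (w s) * g (w t) ∂ν = if s = t then m2 else m1 ^ 2 := by
    intro s t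
    by_cases h : s = t
    · subst h
      have : (fun w : Fin T → E => g (w s) * g (w s)) = fun w => g (w s) ^ 2 := by
        funext w; ring
      rw [this, if_pos rfl]
      exact (aux_single μ hg2 T s).2
    · rw [if_neg h, sq]
      exact (aux_pair μ hg1 hg1 T h).2
  have hB : Integrable (fun w : Fin T → E =>
      (1 / (T : ℝ) ^ 2) * ∑ s, ∑ t, g (w s) * g (w t)) ν := by
    refine Integrable.const_mul ?_ _
    exact integrable_finset_sum _ fun s _ => integrable_finset_sum _ fun t _ => hpair s t
  constructor
  · rw [hpt]; exact hA.sub hB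
  · rw [hpt, integral_sub hA hB, integral_const_mul, integral_const_mul,
      integral_finset_sum _ fun t _ => (aux_single μ hg2 T t).1,
      integral_finset_sum _ fun s _ =>
        integrable_finset_sum _ fun t _ => hpair s t]
    have hinner : ∀ s : Fin T,
        ∫ w, ∑ t, g (w s) * g (w t) ∂ν = m2 + ((T : ℝ) - 1) * m1 ^ 2 := by
      intro s
      rw [integral_finset_sum _ fun t _ => hpair s t,
        Finset.sum_congr rfl fun t _ => hpairval s t]
      have : ∀ t : Fin T, (if s = t then m2 else m1 ^ 2)
          = m1 ^ 2 + (if s = t then m2 - m1 ^ 2 else 0) := by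
        intro t; by_cases h : s = t <;> simp [h]
      rw [Finset.sum_congr rfl fun t _ => this t, Finset.sum_add_distrib,
        Finset.sum_const, Finset.card_univ, Fintype.card_fin, nsmul_eq_mul,
        Finset.sum_ite_eq Finset.univ s fun _ => m2 - m1 ^ 2]
      simp
      ring
    rw [Finset.sum_congr rfl fun s _ => hinner s,
      Finset.sum_congr rfl fun t (_ : t ∈ Finset.univ) => (aux_single μ hg2 T t).2,
      Finset.sum_const, Finset.sum_const, Finset.card_univ, Fintype.card_fin,
      nsmul_eq_mul, nsmul_eq_mul]
    rw [← hm2]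
    field_simp
    ring

end Aux

/-- If q is a probability density on ([0,1]^p)^T with a⁻¹ ≤ q ≤ a and T ≥ 2, then
the expected centered sample variance of any square-integrable g lies between
(1/(2a))·‖g‖₂² and a·‖g‖₂², where ‖g‖₂² = ∫g² − (∫g)². -/
theorem expected_sampleVar_density_comparison (p T : ℕ) (hp : 1 ≤ p) (hT : 2 ≤ T)
    (a : ℝ) (ha : 1 < a)
    (q : (Fin T → (Fin p → ℝ)) → ℝ) (hqm : Measurable q)
    (hq1 : ∫ w in unitBoxT p T, q w = 1)
    (hqb : ∀ w ∈ unitBoxT p T, a⁻¹ ≤ q w ∧ q w ≤ a)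
    (g : (Fin p → ℝ) → ℝ) (hgm : Measurable g)
    (hg1 : Integrable g (volume.restrict (unitBox p)))
    (hg2 : Integrable (fun z => g z ^ 2) (volume.restrict (unitBox p))) :
    (1 / (2 * a)) * ((∫ z in unitBox p, g z ^ 2) - (∫ z in unitBox p, g z) ^ 2)
        ≤ ∫ w in unitBoxT p T, sampleVar p T g w * q w ∧
      ∫ w in unitBoxT p T, sampleVar p T g w * q w
        ≤ a * ((∫ z in unitBox p, g z ^ 2) - (∫ z in unitBox p, g z) ^ 2) := by
  classical
  have hBox : MeasurableSet (unitBox p) :=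
    MeasurableSet.univ_pi fun _ => measurableSet_Icc
  have hBoxT : MeasurableSet (unitBoxT p T) :=
    MeasurableSet.univ_pi fun _ => hBox
  set μ : Measure (Fin p → ℝ) := volume.restrict (unitBox p) with hμ
  have hvol1 : volume (unitBox p) = 1 := by
    rw [unitBox, volume_pi_pi]
    simp [Real.volume_Icc]
  haveI hprob : IsProbabilityMeasure μ := by
    constructor
    rw [hμ, Measure.restrict_apply_univ, hvol1]
  -- the restricted volume on the big box is the product of restricted volumes
  have hpi : volume.restrict (unitBoxT p T) = Measure.pi fun _ : Fin T => μ := by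
    refine (Measure.pi_eq ?_).symm
    intro s hs
    rw [Measure.restrict_apply (MeasurableSet.univ_pi hs)]
    rw [unitBoxT, ← Set.pi_inter_distrib, volume_pi_pi]
    refine Finset.prod_congr rfl fun i _ => ?_
    rw [hμ, Measure.restrict_apply (hs i)]
  have hT0 : (0 : ℝ) < (T : ℝ) := by
    have : (0 : ℕ) < T := by omega
    exact_mod_cast this
  have haux := aux_var μ hg1 hg2 T hT
  set m1 : ℝ := ∫ z in unitBox p, g z with hm1
  set m2 : ℝ := ∫ z in unitBox p, g z ^ 2 with hm2
  set D : ℝ := m2 - m1 ^ 2 with hD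
  have hVint : Integrable (fun w => sampleVar p T g w) (volume.restrict (unitBoxT p T)) := by
    rw [hpi]
    exact haux.1
  have hVval : ∫ w, sampleVar p T g w ∂(volume.restrict (unitBoxT p T))
      = (1 - 1 / (T : ℝ)) * D := by
    rw [hpi]
    exact haux.2
  have hVnonneg : ∀ w, 0 ≤ sampleVar p T g w := by
    intro w
    unfold sampleVar
    positivity
  have hVmeas : Measurable (fun w => sampleVar p T g w) := by
    unfold sampleVar
    refine Measurable.const_mul ?_ _
    refine Finset.measurable_sum _ fun t _ => ?_
    refine Measurable.pow ?_ measurable_const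
    refine Measurable.sub (hgm.comp (measurable_pi_apply t)) ?_
    refine Measurable.const_mul ?_ _
    exact Finset.measurable_sum _ fun s _ => hgm.comp (measurable_pi_apply s)
  have ha0 : (0 : ℝ) < a := lt_trans one_pos ha
  have hainv : (0 : ℝ) < a⁻¹ := inv_pos.2 ha0
  have hae : ∀ᵐ w ∂(volume.restrict (unitBoxT p T)), w ∈ unitBoxT p T := ae_restrict_mem hBoxT
  -- integrability of V·q
  have hVq_int : Integrable (fun w => sampleVar p T g w * q w) (volume.restrict (unitBoxT p T)) := by
    refine Integrable.mono' (hVint.const_mul a) ((hVmeas.mul hqm).aestronglyMeasurable) ?_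
    filter_upwards [hae] with w hw
    obtain ⟨hlo, hhi⟩ := hqb w hw
    have hq0 : 0 ≤ q w := le_trans (le_of_lt hainv) hlo
    rw [Real.norm_of_nonneg (mul_nonneg (hVnonneg w) hq0)]
    exact mul_le_mul_of_nonneg_left hhi (hVnonneg w) |>.trans_eq (mul_comm _ _)
  have hupper : ∫ w, sampleVar p T g w * q w ∂(volume.restrict (unitBoxT p T)) ≤ ∫ w, a * sampleVar p T g w ∂(volume.restrict (unitBoxT p T)) := by
    refine integral_mono_ae hVq_int (hVint.const_mul a) ?_
    filter_upwards [hae] with w hw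
    obtain ⟨hlo, hhi⟩ := hqb w hw
    calc sampleVar p T g w * q w ≤ sampleVar p T g w * a :=
          mul_le_mul_of_nonneg_left hhi (hVnonneg w)
      _ = a * sampleVar p T g w := mul_comm _ _
  have hlower : ∫ w, a⁻¹ * sampleVar p T g w ∂(volume.restrict (unitBoxT p T)) ≤ ∫ w, sampleVar p T g w * q w ∂(volume.restrict (unitBoxT p T)) := by
    refine integral_mono_ae (hVint.const_mul a⁻¹) hVq_int ?_
    filter_upwards [hae] with w hw
    obtain ⟨hlo, hhi⟩ := hqb w hw
    calc a⁻¹ * sampleVar p T g w = sampleVar p T g w * a⁻¹ := mul_comm _ _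
      _ ≤ sampleVar p T g w * q w := mul_le_mul_of_nonneg_left hlo (hVnonneg w)
  rw [integral_const_mul] at hupper hlower
  rw [hVval] at hupper hlower
  -- D ≥ 0
  have hInonneg : 0 ≤ (1 - 1 / (T : ℝ)) * D := by
    rw [← hVval]
    exact integral_nonneg hVnonneg
  have hhalf : 1 / (T : ℝ) ≤ 1 / 2 := by
    rw [div_le_div_iff₀ hT0 (by norm_num)]
    have : (2 : ℝ) ≤ (T : ℝ) := by exact_mod_cast hT
    linarith
  have hfrac : (0 : ℝ) < 1 - 1 / (T : ℝ) := by linarith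
  have hDnonneg : 0 ≤ D := nonneg_of_mul_nonneg_right hInonneg hfrac
  constructor
  · refine le_trans ?_ hlower
    have h1 : 1 / (2 * a) ≤ a⁻¹ * (1 - 1 / (T : ℝ)) := by
      rw [one_div, mul_inv]
      calc (2 : ℝ)⁻¹ * a⁻¹ = a⁻¹ * (1 / 2) := by ring
        _ ≤ a⁻¹ * (1 - 1 / (T : ℝ)) :=
            mul_le_mul_of_nonneg_left (by linarith) (le_of_lt hainv)
    calc (1 / (2 * a)) * D ≤ (a⁻¹ * (1 - 1 / (T : ℝ))) * D :=
          mul_le_mul_of_nonneg_right h1 hDnonneg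
      _ = a⁻¹ * ((1 - 1 / (T : ℝ)) * D) := by ring
  · refine le_trans hupper ?_
    have h2 : (1 - 1 / (T : ℝ)) * D ≤ D := by
      nlinarith [mul_nonneg (le_of_lt (div_pos one_pos hT0)) hDnonneg]
    exact mul_le_mul_of_nonneg_left h2 (le_of_lt ha0)
end

section
/- Let p ≥ 1, T ≥ 2, and N ≥ 1 be integers, let a > 1, and let q₁, …, q_N : ([0,1]^p)^T → ℝ be measurable probability densities with a⁻¹ ≤ q_i(w) ≤ a for all w and all i. For square-integrable g : [0,1]^p → ℝ define ‖g‖² = (1/N)·Σ_{i=1}^{N} ∫_{([0,1]^p)^T} V_T(g)(w)·q_i(w) dw. If g₋ and g∼ are square-integrable functions on [0,1]^p with ∫ g₋ = 0, ∫ g∼ = 0, and ∫ g₋·g∼ = 0, then ‖g₋ + g∼‖² ≥ (1/(2a²))·( ‖g₋‖² + ‖g∼‖² ). -/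
open MeasureTheory

/-- The population norm ‖g‖² = (1/N)·Σ_i ∫ V_T(g)·q_i. -/
noncomputable def popNormSq (p T N : ℕ) (q : Fin N → (Fin T → (Fin p → ℝ)) → ℝ)
    (g : (Fin p → ℝ) → ℝ) : ℝ :=
  (1 / (N : ℝ)) * ∑ i, ∫ w in unitBoxT p T, sampleVar p T g w * q i w

namespace PopAux
open Function Set

lemma measurableSet_unitBox (p : ℕ) : MeasurableSet (unitBox p) :=
  MeasurableSet.univ_pi fun _ => measurableSet_Icc

lemma measurableSet_unitBoxT (p T : ℕ) : MeasurableSet (unitBoxT p T) :=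
  MeasurableSet.univ_pi fun _ => measurableSet_unitBox p

lemma volume_unitBox (p : ℕ) : volume (unitBox p) = 1 := by
  rw [unitBox, volume_pi_pi]
  simp [Real.volume_Icc]

noncomputable def μb (p : ℕ) : Measure (Fin p → ℝ) := volume.restrict (unitBox p)

instance (p : ℕ) : IsProbabilityMeasure (μb p) :=
  ⟨by rw [μb, Measure.restrict_apply_univ, volume_unitBox]⟩

noncomputable abbrev νb (p T : ℕ) : Measure (Fin T → (Fin p → ℝ)) :=
  Measure.pi (fun _ : Fin T => μb p)

lemma restrict_eq_pi (p T : ℕ) :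
    volume.restrict (unitBoxT p T) = νb p T := by
  refine (Measure.pi_eq fun s hs => ?_).symm
  rw [Measure.restrict_apply (MeasurableSet.univ_pi hs), unitBoxT,
    ← Set.pi_inter_distrib, volume_pi_pi]
  simp_rw [μb, Measure.restrict_apply (hs _)]

lemma map_eval (p T : ℕ) (t : Fin T) :
    (νb p T).map (fun w => w t) = μb p := by
  ext s hs
  rw [Measure.map_apply (measurable_pi_apply t) hs]
  have hpre : (fun w : Fin T → (Fin p → ℝ) => w t) ⁻¹' s
      = Set.pi Set.univ (Function.update (fun _ => Set.univ) t s) := Set.eval_preimage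
  rw [hpre, Measure.pi_pi]
  have key : ∀ j, μb p (Function.update (fun _ => (Set.univ : Set (Fin p → ℝ))) t s j)
      = Function.update (fun _ : Fin T => (1 : ENNReal)) t (μb p s) j := by
    intro j
    rcases eq_or_ne j t with rfl | hj
    · simp
    · simp [Function.update_of_ne hj]
  simp_rw [key]
  rw [Finset.prod_update_of_mem (Finset.mem_univ t)]
  simp

lemma map_evalPair (p T : ℕ) {s t : Fin T} (hst : s ≠ t) :
    (νb p T).map (fun w => (w s, w t)) = (μb p).prod (μb p) := by
  refine (Measure.prod_eq (μ := μb p) (ν := μb p) fun u v hu hv => ?_).symm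
  rw [Measure.map_apply ((measurable_pi_apply s).prodMk (measurable_pi_apply t)) (hu.prod hv)]
  have hpre : (fun w : Fin T → (Fin p → ℝ) => (w s, w t)) ⁻¹' (u ×ˢ v)
      = Set.pi Set.univ (Function.update (Function.update (fun _ => Set.univ) s u) t v) := by
    ext w
    simp only [Set.mem_preimage, Set.mem_prod, Set.mem_pi, Set.mem_univ, true_implies]
    constructor
    · rintro ⟨h1, h2⟩ j
      rcases eq_or_ne j t with rfl | hjt
      · simpa using h2
      · rcases eq_or_ne j s with rfl | hjs
        · simpa [Function.update_of_ne hjt, Function.update_self] using h1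
        · simp [Function.update_of_ne hjt, Function.update_of_ne hjs]
    · intro h
      refine ⟨?_, ?_⟩
      · have := h s
        simpa [Function.update_of_ne hst, Function.update_self] using this
      · have := h t
        simpa using this
  rw [hpre, Measure.pi_pi]
  have key : ∀ j, μb p (Function.update (Function.update
        (fun _ => (Set.univ : Set (Fin p → ℝ))) s u) t v j)
      = Function.update (Function.update (fun _ : Fin T => (1 : ENNReal)) s (μb p u))
          t (μb p v) j := by
    intro j
    rcases eq_or_ne j t with rfl | hjt
    · simp
    · rcases eq_or_ne j s with rfl | hjs
      · simp [Function.update_of_ne hjt]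
      · simp [Function.update_of_ne hjt, Function.update_of_ne hjs]
  simp_rw [key]
  rw [Finset.prod_update_of_mem (Finset.mem_univ t),
    Finset.prod_update_of_mem (by simp [hst])]
  simp [mul_comm]

section
variable {p T : ℕ} {f g : (Fin p → ℝ) → ℝ}

lemma integral_eval (hf : Measurable f) (t : Fin T) :
    ∫ w, f (w t) ∂(νb p T) = ∫ z, f z ∂(μb p) := by
  rw [← map_eval p T t, integral_map (measurable_pi_apply t).aemeasurable
    hf.aestronglyMeasurable]

lemma integrable_eval (hf : Measurable f) (hfi : Integrable f (μb p)) (t : Fin T) :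
    Integrable (fun w : Fin T → Fin p → ℝ => f (w t)) (νb p T) := by
  rw [← map_eval p T t] at hfi
  exact (integrable_map_measure hf.aestronglyMeasurable
    (measurable_pi_apply t).aemeasurable).mp hfi

lemma integral_evalPair (hf : Measurable f) (hg : Measurable g) {s t : Fin T} (hst : s ≠ t) :
    ∫ w, f (w s) * g (w t) ∂(νb p T) = (∫ z, f z ∂(μb p)) * ∫ z, g z ∂(μb p) := by
  have hm : Measurable (fun w : Fin T → Fin p → ℝ => (w s, w t)) :=
    (measurable_pi_apply s).prodMk (measurable_pi_apply t)
  have key : ∫ w, f (w s) * g (w t) ∂(νb p T)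
      = ∫ z : (Fin p → ℝ) × (Fin p → ℝ), f z.1 * g z.2 ∂((μb p).prod (μb p)) := by
    rw [← map_evalPair p T hst]
    exact (integral_map hm.aemeasurable
      ((hf.comp measurable_fst).mul (hg.comp measurable_snd)).aestronglyMeasurable).symm
  rw [key, integral_prod_mul]

lemma integrable_mul_sq {α : Type*} [MeasurableSpace α] {μ : Measure α} {f g : α → ℝ}
    (hf : AEStronglyMeasurable f μ) (hg : AEStronglyMeasurable g μ)
    (hf2 : Integrable (fun z => f z ^ 2) μ) (hg2 : Integrable (fun z => g z ^ 2) μ) :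
    Integrable (fun z => f z * g z) μ := by
  refine Integrable.mono' ((hf2.add hg2).div_const 2) (hf.mul hg) ?_
  filter_upwards with z
  rw [Real.norm_eq_abs, abs_mul]
  simp only [Pi.add_apply]
  nlinarith [sq_nonneg (|f z| - |g z|), sq_abs (f z), sq_abs (g z), abs_nonneg (f z),
    abs_nonneg (g z)]

lemma integrable_evalPair (hf : Measurable f) (hg : Measurable g)
    (hf2 : Integrable (fun z => f z ^ 2) (μb p)) (hg2 : Integrable (fun z => g z ^ 2) (μb p))
    (s t : Fin T) :
    Integrable (fun w : Fin T → Fin p → ℝ => f (w s) * g (w t)) (νb p T) :=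
  integrable_mul_sq (hf.comp (measurable_pi_apply s)).aestronglyMeasurable
    (hg.comp (measurable_pi_apply t)).aestronglyMeasurable
    (integrable_eval (hf.pow_const 2) hf2 s) (integrable_eval (hg.pow_const 2) hg2 t)

lemma integral_sum_mul_sum (hf : Measurable f) (hg : Measurable g)
    (hf2 : Integrable (fun z => f z ^ 2) (μb p)) (hg2 : Integrable (fun z => g z ^ 2) (μb p)) :
    ∫ w, (∑ s, f (w s)) * (∑ t, g (w t)) ∂(νb p T)
      = T * ∫ z, f z * g z ∂(μb p)
        + (T * (T - 1) : ℝ) * ((∫ z, f z ∂(μb p)) * ∫ z, g z ∂(μb p)) := by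
  have hint : ∀ s t : Fin T,
      Integrable (fun w : Fin T → Fin p → ℝ => f (w s) * g (w t)) (νb p T) :=
    fun s t => integrable_evalPair hf hg hf2 hg2 s t
  have h1 : ∀ w : Fin T → Fin p → ℝ, (∑ s, f (w s)) * (∑ t, g (w t))
      = ∑ s, ∑ t, f (w s) * g (w t) := by
    intro w; rw [Finset.sum_mul_sum]
  simp_rw [h1]
  rw [integral_finset_sum _ fun s _ => integrable_finset_sum _ fun t _ => hint s t]
  have h2 : ∀ s : Fin T, ∫ w, ∑ t, f (w s) * g (w t) ∂(νb p T)
      = ∑ t, ∫ w, f (w s) * g (w t) ∂(νb p T) :=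
    fun s => integral_finset_sum _ fun t _ => hint s t
  simp_rw [h2]
  have h3 : ∀ s t : Fin T, ∫ w, f (w s) * g (w t) ∂(νb p T)
      = if s = t then ∫ z, f z * g z ∂(μb p)
        else (∫ z, f z ∂(μb p)) * ∫ z, g z ∂(μb p) := by
    intro s t
    rcases eq_or_ne s t with rfl | hst
    · simp only [if_pos rfl]
      exact integral_eval (hf.mul hg) s
    · rw [if_neg hst]; exact integral_evalPair hf hg hst
  simp_rw [h3]
  set A := ∫ z, f z * g z ∂(μb p) with hA
  set B := (∫ z, f z ∂(μb p)) * ∫ z, g z ∂(μb p) with hB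
  have h4 : ∀ s : Fin T, (∑ t, if s = t then A else B) = A + ((T:ℝ) - 1) * B := by
    intro s
    have e : ∀ t : Fin T, (if s = t then A else B) = B + (if s = t then A - B else 0) := by
      intro t; by_cases h : s = t <;> simp [h]
    simp_rw [e]
    rw [Finset.sum_add_distrib, Finset.sum_const, Finset.sum_ite_eq]
    simp [Finset.card_univ]
    ring
  simp_rw [h4, Finset.sum_const, Finset.card_univ, Fintype.card_fin, nsmul_eq_mul]
  ring

lemma sampleVar_eq (hT : (T:ℝ) ≠ 0) (g : (Fin p → ℝ) → ℝ) (w : Fin T → Fin p → ℝ) :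
    sampleVar p T g w
      = (1/(T:ℝ)) * ∑ t, g (w t)^2
        - (1/(T:ℝ))^2 * ((∑ s, g (w s)) * (∑ t, g (w t))) := by
  unfold sampleVar
  have e : ∀ t : Fin T, (g (w t) - (1/(T:ℝ)) * ∑ s, g (w s))^2
      = g (w t)^2 - ((2*(1/(T:ℝ))) * ∑ s, g (w s)) * g (w t)
        + ((1/(T:ℝ)) * ∑ s, g (w s))^2 := by
    intro t; ring
  simp_rw [e]
  rw [Finset.sum_add_distrib, Finset.sum_sub_distrib, ← Finset.mul_sum, Finset.sum_const,
    Finset.card_univ, Fintype.card_fin, nsmul_eq_mul]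
  field_simp
  ring

lemma measurable_sampleVar (hg : Measurable g) :
    Measurable (sampleVar p T g) := by
  unfold sampleVar
  have hsum : Measurable fun w : Fin T → Fin p → ℝ => ∑ s, g (w s) :=
    Finset.measurable_sum _ fun s _ => hg.comp (measurable_pi_apply s)
  exact measurable_const.mul <| Finset.measurable_sum _ fun t _ =>
    ((hg.comp (measurable_pi_apply t)).sub (measurable_const.mul hsum)).pow_const 2

lemma integrable_sampleVar (hT : (T:ℝ) ≠ 0) (hg : Measurable g)
    (hg2 : Integrable (fun z => g z ^ 2) (μb p)) :
    Integrable (sampleVar p T g) (νb p T) := by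
  have hrw : sampleVar p T g = fun w =>
      (1/(T:ℝ)) * ∑ t, g (w t)^2 - (1/(T:ℝ))^2 * ∑ s, ∑ t, g (w s) * g (w t) := by
    funext w; rw [sampleVar_eq hT, Finset.sum_mul_sum]
  rw [hrw]
  exact ((integrable_finset_sum _ fun t _ =>
      integrable_eval (hg.pow_const 2) hg2 t).const_mul _).sub
    ((integrable_finset_sum _ fun s _ => integrable_finset_sum _ fun t _ =>
      integrable_evalPair hg hg hg2 hg2 s t).const_mul _)

lemma integral_sampleVar (hT : (T:ℝ) ≠ 0) (hg : Measurable g)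
    (hg2 : Integrable (fun z => g z ^ 2) (μb p)) :
    ∫ w, sampleVar p T g w ∂(νb p T)
      = (1 - 1/(T:ℝ)) * ((∫ z, g z ^ 2 ∂(μb p)) - (∫ z, g z ∂(μb p))^2) := by
  have hrw : (fun w => sampleVar p T g w) = fun w =>
      (1/(T:ℝ)) * ∑ t, g (w t)^2
        - (1/(T:ℝ))^2 * ((∑ s, g (w s)) * (∑ t, g (w t))) := by
    funext w; exact sampleVar_eq hT g w
  rw [hrw]
  have i1 : Integrable (fun w : Fin T → Fin p → ℝ => ∑ t, g (w t)^2) (νb p T) :=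
    integrable_finset_sum _ fun t _ => integrable_eval (hg.pow_const 2) hg2 t
  have i2 : Integrable (fun w : Fin T → Fin p → ℝ =>
      (∑ s, g (w s)) * (∑ t, g (w t))) (νb p T) := by
    have e2 : (fun w : Fin T → Fin p → ℝ => (∑ s, g (w s)) * (∑ t, g (w t)))
        = fun w => ∑ s, ∑ t, g (w s) * g (w t) := by
      funext w; rw [Finset.sum_mul_sum]
    rw [e2]
    exact integrable_finset_sum _ fun s _ => integrable_finset_sum _ fun t _ =>
      integrable_evalPair hg hg hg2 hg2 s t
  rw [integral_sub (i1.const_mul _) (i2.const_mul _), integral_const_mul, integral_const_mul,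
    integral_finset_sum _ (fun t _ => integrable_eval (hg.pow_const 2) hg2 t),
    integral_sum_mul_sum hg hg hg2 hg2]
  have e3 : ∀ t : Fin T, ∫ w, g (w t)^2 ∂(νb p T) = ∫ z, g z^2 ∂(μb p) :=
    fun t => integral_eval (hg.pow_const 2) t
  simp_rw [e3]
  rw [Finset.sum_const, Finset.card_univ, Fintype.card_fin, nsmul_eq_mul]
  have e4 : ∫ z, g z * g z ∂(μb p) = ∫ z, g z^2 ∂(μb p) := by
    congr 1; funext z; ring
  rw [e4]
  field_simp
  ring

lemma sampleVar_nonneg (g : (Fin p → ℝ) → ℝ) (w : Fin T → Fin p → ℝ) :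
    0 ≤ sampleVar p T g w := by
  unfold sampleVar
  positivity

lemma pop_bounds (p T N : ℕ) (hT : (T:ℝ) ≠ 0) (hN : 1 ≤ N) (a : ℝ) (ha : 1 < a)
    (q : Fin N → (Fin T → (Fin p → ℝ)) → ℝ) (hqm : ∀ i, Measurable (q i))
    (hqb : ∀ i, ∀ w ∈ unitBoxT p T, a⁻¹ ≤ q i w ∧ q i w ≤ a)
    (g : (Fin p → ℝ) → ℝ) (hg : Measurable g)
    (hg2 : Integrable (fun z => g z ^ 2) (μb p)) :
    popNormSq p T N q g ≤ a * ∫ w, sampleVar p T g w ∂(νb p T)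
      ∧ ∫ w, sampleVar p T g w ∂(νb p T) ≤ a * popNormSq p T N q g := by
  have ha0 : (0:ℝ) < a := lt_trans one_pos ha
  have hia : (0:ℝ) < a⁻¹ := inv_pos.2 ha0
  set J := ∫ w, sampleVar p T g w ∂(νb p T) with hJ
  have hρ : volume.restrict (unitBoxT p T) = νb p T := restrict_eq_pi p T
  have hsv : Integrable (sampleVar p T g) (volume.restrict (unitBoxT p T)) := by
    rw [hρ]; exact integrable_sampleVar hT hg hg2
  have key : ∀ i, a⁻¹ * J ≤ (∫ w in unitBoxT p T, sampleVar p T g w * q i w)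
      ∧ (∫ w in unitBoxT p T, sampleVar p T g w * q i w) ≤ a * J := by
    intro i
    have hmeas : AEStronglyMeasurable (fun w => sampleVar p T g w * q i w)
        (volume.restrict (unitBoxT p T)) :=
      ((measurable_sampleVar hg).mul (hqm i)).aestronglyMeasurable
    have hbound : ∀ᵐ w ∂(volume.restrict (unitBoxT p T)),
        ‖sampleVar p T g w * q i w‖ ≤ a * sampleVar p T g w := by
      filter_upwards [ae_restrict_mem (measurableSet_unitBoxT p T)] with w hw
      have h1 := (hqb i w hw).1
      have h2 := (hqb i w hw).2
      have hq0 : 0 ≤ q i w := le_trans hia.le h1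
      rw [Real.norm_eq_abs, abs_of_nonneg (mul_nonneg (sampleVar_nonneg g w) hq0),
        mul_comm a _]
      exact mul_le_mul_of_nonneg_left h2 (sampleVar_nonneg g w)
    have hint : Integrable (fun w => sampleVar p T g w * q i w)
        (volume.restrict (unitBoxT p T)) :=
      Integrable.mono' (hsv.const_mul a) hmeas hbound
    constructor
    · have hb : ∀ᵐ w ∂(volume.restrict (unitBoxT p T)),
          a⁻¹ * sampleVar p T g w ≤ sampleVar p T g w * q i w := by
        filter_upwards [ae_restrict_mem (measurableSet_unitBoxT p T)] with w hw
        calc a⁻¹ * sampleVar p T g w = sampleVar p T g w * a⁻¹ := mul_comm _ _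
          _ ≤ sampleVar p T g w * q i w :=
            mul_le_mul_of_nonneg_left (hqb i w hw).1 (sampleVar_nonneg g w)
      have h := integral_mono_ae (hsv.const_mul a⁻¹) hint hb
      calc a⁻¹ * J = ∫ w, a⁻¹ * sampleVar p T g w ∂(volume.restrict (unitBoxT p T)) := by
            rw [integral_const_mul, hρ]
        _ ≤ _ := h
    · have hb : ∀ᵐ w ∂(volume.restrict (unitBoxT p T)),
          sampleVar p T g w * q i w ≤ a * sampleVar p T g w := by
        filter_upwards [hbound] with w h
        exact le_trans (le_trans (le_abs_self _) (le_of_eq (Real.norm_eq_abs _).symm)) h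
      have h := integral_mono_ae hint (hsv.const_mul a) hb
      calc (∫ w in unitBoxT p T, sampleVar p T g w * q i w)
          ≤ ∫ w, a * sampleVar p T g w ∂(volume.restrict (unitBoxT p T)) := h
        _ = a * J := by rw [integral_const_mul, hρ]
  have hNpos : (0:ℝ) < N := by exact_mod_cast Nat.lt_of_lt_of_le Nat.zero_lt_one hN
  constructor
  · have hsum : ∑ i, (∫ w in unitBoxT p T, sampleVar p T g w * q i w) ≤ (N:ℝ) * (a * J) := by
      calc ∑ i, (∫ w in unitBoxT p T, sampleVar p T g w * q i w)
          ≤ ∑ _i : Fin N, a * J := Finset.sum_le_sum fun i _ => (key i).2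
        _ = (N:ℝ) * (a * J) := by
            rw [Finset.sum_const, Finset.card_univ, Fintype.card_fin, nsmul_eq_mul]
    calc popNormSq p T N q g
        ≤ (1/(N:ℝ)) * ((N:ℝ) * (a * J)) :=
          mul_le_mul_of_nonneg_left hsum (by positivity)
      _ = a * J := by field_simp
  · have hsum : (N:ℝ) * (a⁻¹ * J) ≤ ∑ i, (∫ w in unitBoxT p T, sampleVar p T g w * q i w) := by
      calc (N:ℝ) * (a⁻¹ * J)
          = ∑ _i : Fin N, a⁻¹ * J := by
            rw [Finset.sum_const, Finset.card_univ, Fintype.card_fin, nsmul_eq_mul]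
        _ ≤ _ := Finset.sum_le_sum fun i _ => (key i).1
    have hpop : a⁻¹ * J ≤ popNormSq p T N q g := by
      calc a⁻¹ * J = (1/(N:ℝ)) * ((N:ℝ) * (a⁻¹ * J)) := by field_simp
        _ ≤ popNormSq p T N q g := mul_le_mul_of_nonneg_left hsum (by positivity)
    calc J = a * (a⁻¹ * J) := by field_simp
      _ ≤ a * popNormSq p T N q g := mul_le_mul_of_nonneg_left hpop ha0.le

end
end PopAux

/-- If the panel densities q_i satisfy a⁻¹ ≤ q_i ≤ a and g₋, g∼ are square-integrable,
mean-zero, and L²-orthogonal on [0,1]^p, then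
‖g₋ + g∼‖² ≥ (1/(2a²))·(‖g₋‖² + ‖g∼‖²). -/
theorem popNormSq_orth_lower_bound (p T N : ℕ) (hp : 1 ≤ p) (hT : 2 ≤ T) (hN : 1 ≤ N)
    (a : ℝ) (ha : 1 < a)
    (q : Fin N → (Fin T → (Fin p → ℝ)) → ℝ) (hqm : ∀ i, Measurable (q i))
    (hq1 : ∀ i, ∫ w in unitBoxT p T, q i w = 1)
    (hqb : ∀ i, ∀ w ∈ unitBoxT p T, a⁻¹ ≤ q i w ∧ q i w ≤ a)
    (gm gn : (Fin p → ℝ) → ℝ) (hgmm : Measurable gm) (hgnm : Measurable gn)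
    (hgm1 : Integrable gm (volume.restrict (unitBox p)))
    (hgm2 : Integrable (fun z => gm z ^ 2) (volume.restrict (unitBox p)))
    (hgn1 : Integrable gn (volume.restrict (unitBox p)))
    (hgn2 : Integrable (fun z => gn z ^ 2) (volume.restrict (unitBox p)))
    (hgm0 : ∫ z in unitBox p, gm z = 0)
    (hgn0 : ∫ z in unitBox p, gn z = 0)
    (horth : ∫ z in unitBox p, gm z * gn z = 0) :
    (1 / (2 * a ^ 2)) * (popNormSq p T N q gm + popNormSq p T N q gn)
      ≤ popNormSq p T N q (fun z => gm z + gn z) := by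
  classical
  open PopAux in
  have hTne : (T:ℝ) ≠ 0 := by
    have : 0 < T := lt_of_lt_of_le (by norm_num) hT
    exact_mod_cast this.ne'
  have ha0 : (0:ℝ) < a := lt_trans one_pos ha
  -- repackage integrability over μb
  have hgm1' : Integrable gm (PopAux.μb p) := hgm1
  have hgm2' : Integrable (fun z => gm z ^ 2) (PopAux.μb p) := hgm2
  have hgn1' : Integrable gn (PopAux.μb p) := hgn1
  have hgn2' : Integrable (fun z => gn z ^ 2) (PopAux.μb p) := hgn2
  have hgsm : Measurable (fun z => gm z + gn z) := hgmm.add hgnm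
  have hmn : Integrable (fun z => gm z * gn z) (PopAux.μb p) :=
    PopAux.integrable_mul_sq hgmm.aestronglyMeasurable hgnm.aestronglyMeasurable hgm2' hgn2'
  have hgs2 : Integrable (fun z => (gm z + gn z) ^ 2) (PopAux.μb p) := by
    have e : (fun z => (gm z + gn z) ^ 2)
        = fun z => gm z ^ 2 + 2 * (gm z * gn z) + gn z ^ 2 := by
      funext z; ring
    rw [e]
    exact (hgm2'.add (hmn.const_mul 2)).add hgn2'
  -- integrals over μb
  have hgm0' : ∫ z, gm z ∂(PopAux.μb p) = 0 := hgm0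
  have hgn0' : ∫ z, gn z ∂(PopAux.μb p) = 0 := hgn0
  have horth' : ∫ z, gm z * gn z ∂(PopAux.μb p) = 0 := horth
  -- J values
  set Jm := ∫ w, sampleVar p T gm w ∂(PopAux.νb p T) with hJm
  set Jn := ∫ w, sampleVar p T gn w ∂(PopAux.νb p T) with hJn
  set Js := ∫ w, sampleVar p T (fun z => gm z + gn z) w ∂(PopAux.νb p T) with hJs
  have hJmv : Jm = (1 - 1/(T:ℝ)) * (∫ z, gm z ^ 2 ∂(PopAux.μb p)) := by
    rw [hJm, PopAux.integral_sampleVar hTne hgmm hgm2', hgm0']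
    ring
  have hJnv : Jn = (1 - 1/(T:ℝ)) * (∫ z, gn z ^ 2 ∂(PopAux.μb p)) := by
    rw [hJn, PopAux.integral_sampleVar hTne hgnm hgn2', hgn0']
    ring
  have hsum0 : ∫ z, (gm z + gn z) ∂(PopAux.μb p) = 0 := by
    rw [integral_add hgm1' hgn1', hgm0', hgn0', add_zero]
  have hsumsq : ∫ z, (gm z + gn z) ^ 2 ∂(PopAux.μb p)
      = (∫ z, gm z ^ 2 ∂(PopAux.μb p)) + ∫ z, gn z ^ 2 ∂(PopAux.μb p) := by
    have e : (fun z => (gm z + gn z) ^ 2)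
        = fun z => gm z ^ 2 + 2 * (gm z * gn z) + gn z ^ 2 := by
      funext z; ring
    have hA : Integrable (fun z => gm z ^ 2 + 2 * (gm z * gn z)) (PopAux.μb p) :=
      hgm2'.add (hmn.const_mul 2)
    rw [e, integral_add hA hgn2', integral_add hgm2' (hmn.const_mul 2),
      integral_const_mul, horth']
    ring
  have hJsv : Js = Jm + Jn := by
    rw [hJs, PopAux.integral_sampleVar hTne hgsm hgs2, hsum0, hsumsq, hJmv, hJnv]
    ring
  -- bounds
  obtain ⟨hXa, hXb⟩ := PopAux.pop_bounds p T N hTne hN a ha q hqm hqb gm hgmm hgm2'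
  obtain ⟨hYa, hYb⟩ := PopAux.pop_bounds p T N hTne hN a ha q hqm hqb gn hgnm hgn2'
  obtain ⟨hSa, hSb⟩ := PopAux.pop_bounds p T N hTne hN a ha q hqm hqb _ hgsm hgs2
  set X := popNormSq p T N q gm
  set Y := popNormSq p T N q gn
  set S := popNormSq p T N q (fun z => gm z + gn z)
  have hJm0 : 0 ≤ Jm := integral_nonneg fun w => PopAux.sampleVar_nonneg gm w
  have hJn0 : 0 ≤ Jn := integral_nonneg fun w => PopAux.sampleVar_nonneg gn w
  have hJs0 : 0 ≤ Js := by
    rw [hJs]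
    exact integral_nonneg fun w => PopAux.sampleVar_nonneg _ w
  have hS0 : 0 ≤ S := by nlinarith [le_trans hJs0 hSb, ha0]
  have hsumXY : X + Y ≤ a ^ 2 * S := by
    nlinarith [hXa, hYa, hJsv, mul_le_mul_of_nonneg_left hSb ha0.le]
  have h2a : (0:ℝ) < 2 * a ^ 2 := by positivity
  rw [div_mul_eq_mul_div, one_mul, div_le_iff₀ h2a]
  nlinarith [hsumXY, mul_nonneg (sq_nonneg a) hS0]
end

section
/- Let n ≥ 1 and d ≥ 1 be integers. Let M be an n×n real symmetric idempotent matrix (Mᵀ = M and M² = M), let Ψ be an n×d real matrix such that ΨᵀMΨ is positive definite, let C be an n×n real symmetric positive semidefinite matrix with cᵀCc ≤ a·cᵀc for all c ∈ ℝⁿ (where a > 0), and let b > 0 satisfy vᵀΨᵀΨv ≤ b·vᵀΨᵀMΨv for all v ∈ ℝ^d. Then Tr( Ψ(ΨᵀMΨ)⁻¹ΨᵀM C MΨ(ΨᵀMΨ)⁻¹Ψᵀ ) ≤ a·b·d. -/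
open Matrix

lemma psd_trace_nonneg {m : ℕ} {A : Matrix (Fin m) (Fin m) ℝ} (hA : A.PosSemidef) :
    0 ≤ A.trace := by
  rw [Matrix.trace]
  apply Finset.sum_nonneg
  intro i _
  have := hA.dotProduct_mulVec_nonneg (Pi.single i 1)
  simpa [Matrix.mulVec_single, dotProduct, Pi.single_apply, Finset.sum_ite_eq] using this

lemma psd_trace_mul_nonneg {m : ℕ} {X Y : Matrix (Fin m) (Fin m) ℝ}
    (hX : X.PosSemidef) (hY : Y.PosSemidef) : 0 ≤ (X * Y).trace := by
  obtain ⟨B, rfl⟩ : ∃ B : Matrix (Fin m) (Fin m) ℝ, X = Bᴴ * B := by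
    open scoped MatrixOrder in
    have h0 : 0 ≤ X := Matrix.nonneg_iff_posSemidef.mpr hX
    open scoped MatrixOrder in
    exact ⟨CFC.sqrt X, by rw [← Matrix.star_eq_conjTranspose,
      (CFC.sqrt_nonneg X).isSelfAdjoint.star_eq, CFC.sqrt_mul_sqrt_self X h0]⟩
  rw [Matrix.mul_assoc, Matrix.trace_mul_comm]
  exact psd_trace_nonneg (hY.mul_mul_conjTranspose_same B)

/-- Trace bound for the within-transformed projection: if M is symmetric idempotent,
ΨᵀMΨ is positive definite, C is symmetric PSD with quadratic form bounded by a, and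
vᵀΨᵀΨv ≤ b·vᵀΨᵀMΨv for all v, then
Tr(Ψ(ΨᵀMΨ)⁻¹ΨᵀM C MΨ(ΨᵀMΨ)⁻¹Ψᵀ) ≤ a·b·d. -/
theorem trace_projection_bound (n d : ℕ) (hn : 1 ≤ n) (hd : 1 ≤ d)
    (M : Matrix (Fin n) (Fin n) ℝ) (hMs : M.IsSymm) (hMi : M * M = M)
    (Ψ : Matrix (Fin n) (Fin d) ℝ) (hpd : (Ψᵀ * M * Ψ).PosDef)
    (C : Matrix (Fin n) (Fin n) ℝ) (hCs : C.IsSymm) (hCpsd : C.PosSemidef)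
    (a : ℝ) (ha : 0 < a) (hC : ∀ c : Fin n → ℝ, c ⬝ᵥ C.mulVec c ≤ a * (c ⬝ᵥ c))
    (b : ℝ) (hb : 0 < b)
    (hΨ : ∀ v : Fin d → ℝ,
      v ⬝ᵥ (Ψᵀ * Ψ).mulVec v ≤ b * (v ⬝ᵥ (Ψᵀ * M * Ψ).mulVec v)) :
    (Ψ * (Ψᵀ * M * Ψ)⁻¹ * Ψᵀ * M * C * M * Ψ * (Ψᵀ * M * Ψ)⁻¹ * Ψᵀ).trace
      ≤ a * b * d := by
  set S : Matrix (Fin d) (Fin d) ℝ := Ψᵀ * M * Ψ with hS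
  set A : Matrix (Fin d) (Fin d) ℝ := S⁻¹ with hA
  have hdet : IsUnit S.det := isUnit_iff_ne_zero.mpr hpd.det_pos.ne'
  have hAS : A * S = 1 := Matrix.nonsing_inv_mul S hdet
  have hSsymm : Sᵀ = S := by
    rw [hS, Matrix.transpose_mul, Matrix.transpose_mul, Matrix.transpose_transpose,
      hMs.eq, Matrix.mul_assoc]
  have hAsymm : Aᵀ = A := by
    rw [hA, Matrix.transpose_nonsing_inv, hSsymm]
  have hApsd : A.PosSemidef := hpd.inv.posSemidef
  -- a•1 - C is PSD
  have haC : (a • (1 : Matrix (Fin n) (Fin n) ℝ) - C).PosSemidef := by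
    refine Matrix.PosSemidef.of_dotProduct_mulVec_nonneg ?_ ?_
    · rw [Matrix.IsHermitian, Matrix.conjTranspose_eq_transpose_of_trivial,
        Matrix.transpose_sub, Matrix.transpose_smul, Matrix.transpose_one, hCs.eq]
    · intro x
      have := hC x
      simp only [Matrix.sub_mulVec, Matrix.smul_mulVec, Matrix.one_mulVec,
        dotProduct_sub, dotProduct_smul, star_trivial, smul_eq_mul]
      linarith
  -- b•S - ΨᵀΨ is PSD
  have hbS : (b • S - Ψᵀ * Ψ).PosSemidef := by
    refine Matrix.PosSemidef.of_dotProduct_mulVec_nonneg ?_ ?_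
    · rw [Matrix.IsHermitian, Matrix.conjTranspose_eq_transpose_of_trivial,
        Matrix.transpose_sub, Matrix.transpose_smul, hSsymm, Matrix.transpose_mul,
        Matrix.transpose_transpose]
    · intro x
      have := hΨ x
      simp only [Matrix.sub_mulVec, Matrix.smul_mulVec, dotProduct_sub,
        dotProduct_smul, star_trivial, smul_eq_mul]
      linarith
  set R : Matrix (Fin n) (Fin n) ℝ := Ψ * A * Ψᵀ * M with hR
  have hRT : Rᵀ = M * Ψ * A * Ψᵀ := by
    rw [hR]
    simp [Matrix.transpose_mul, hMs.eq, hAsymm, Matrix.mul_assoc]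
  -- expression = R * C * Rᵀ
  have hexpr : Ψ * (Ψᵀ * M * Ψ)⁻¹ * Ψᵀ * M * C * M * Ψ * (Ψᵀ * M * Ψ)⁻¹ * Ψᵀ
      = R * C * Rᵀ := by
    rw [hRT, hR, ← hS, ← hA]
    simp [Matrix.mul_assoc]
  -- R * Rᵀ trace equals (A * (ΨᵀΨ)).trace
  have htrR : (R * Rᵀ).trace = (A * (Ψᵀ * Ψ)).trace := by
    rw [hRT, hR]
    have : Ψ * A * Ψᵀ * M * (M * Ψ * A * Ψᵀ) = Ψ * (A * S * A * Ψᵀ) := by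
      calc Ψ * A * Ψᵀ * M * (M * Ψ * A * Ψᵀ)
          = Ψ * A * (Ψᵀ * (M * M) * Ψ) * A * Ψᵀ := by
            simp [Matrix.mul_assoc]
        _ = Ψ * (A * S * A * Ψᵀ) := by rw [hMi, ← hS]; simp [Matrix.mul_assoc]
    rw [this, Matrix.trace_mul_comm, hAS]
    simp [Matrix.mul_assoc, Matrix.trace_mul_comm (Ψᵀ) _]
  -- Step 1 : trace(R C Rᵀ) ≤ a * trace(R Rᵀ)
  have step1 : (R * C * Rᵀ).trace ≤ a * (R * Rᵀ).trace := by
    have hpsd : (R * (a • (1 : Matrix (Fin n) (Fin n) ℝ) - C) * Rᴴ).PosSemidef :=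
      haC.mul_mul_conjTranspose_same R
    rw [Matrix.conjTranspose_eq_transpose_of_trivial] at hpsd
    have h0 := psd_trace_nonneg hpsd
    have hexp : R * (a • (1 : Matrix (Fin n) (Fin n) ℝ) - C) * Rᵀ
        = a • (R * Rᵀ) - R * C * Rᵀ := by
      rw [Matrix.mul_sub, Matrix.sub_mul]
      congr 1
      rw [Matrix.mul_smul, Matrix.mul_one, Matrix.smul_mul]
    rw [hexp, Matrix.trace_sub, Matrix.trace_smul, smul_eq_mul] at h0
    linarith
  -- Step 3 : trace(A ΨᵀΨ) ≤ b * d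
  have step3 : (A * (Ψᵀ * Ψ)).trace ≤ b * d := by
    have h0 := psd_trace_mul_nonneg hApsd hbS
    have hexp : A * (b • S - Ψᵀ * Ψ) = b • (A * S) - A * (Ψᵀ * Ψ) := by
      rw [Matrix.mul_sub, Matrix.mul_smul]
    rw [hexp, Matrix.trace_sub, Matrix.trace_smul, hAS, Matrix.trace_one,
      smul_eq_mul] at h0
    simp only [Fintype.card_fin] at h0
    linarith
  calc (Ψ * (Ψᵀ * M * Ψ)⁻¹ * Ψᵀ * M * C * M * Ψ * (Ψᵀ * M * Ψ)⁻¹ * Ψᵀ).trace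
      = (R * C * Rᵀ).trace := by rw [hexpr]
    _ ≤ a * (R * Rᵀ).trace := step1
    _ = a * (A * (Ψᵀ * Ψ)).trace := by rw [htrR]
    _ ≤ a * (b * d) := by
        exact mul_le_mul_of_nonneg_left step3 ha.le
    _ = a * b * d := by ring
end

section
/- Let (Ω, F, P) be a probability space, let p ≥ 1, T ≥ 1, N ≥ 1 be integers, and let W₁, …, W_N be mutually independent random vectors, each W_i = (Z_{i1}, …, Z_{iT}) taking values in ([0,1]^p)^T. For bounded measurable f, g : [0,1]^p → ℝ define ζ_i(f,g) = (1/T)·Σ_{t=1}^T ( f(Z_{it}) − (1/T)Σ_{s=1}^T f(Z_{is}) )·( g(Z_{it}) − (1/T)Σ_{s=1}^T g(Z_{is}) ), set ⟨f,g⟩_{NT} = (1/N)·Σ_{i=1}^N ζ_i(f,g), ⟨f,g⟩ = E[⟨f,g⟩_{NT}], and ‖g‖² = ⟨g,g⟩. Let Θ be a d-dimensional linear subspace of bounded measurable functions on [0,1]^p on which ⟨·,·⟩ is an inner product (‖g‖ > 0 for every nonzero g ∈ Θ), let v : [0,1]^p → ℝ be bounded measurable with sup-norm ‖v‖_∞,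 and assume the random variable sup_{g ∈ Θ, g ≠ 0} |⟨v,g⟩_{NT} − ⟨v,g⟩|²/‖g‖² is measurable. Then E[ sup_{g ∈ Θ, g ≠ 0} |⟨v,g⟩_{NT} − ⟨v,g⟩|² / ‖g‖² ] ≤ 4·‖v‖_∞²·d / N. -/
open MeasureTheory

/-- ζ(Z)(f,g) : the centered sample covariance of f and g along the panel
observations Z 0, …, Z (T−1). -/
noncomputable def zetaCov (p T : ℕ) (Z : Fin T → (Fin p → ℝ))
    (f g : (Fin p → ℝ) → ℝ) : ℝ :=
  (1 / (T : ℝ)) * ∑ t, (f (Z t) - (1 / (T : ℝ)) * ∑ s, f (Z s))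
      * (g (Z t) - (1 / (T : ℝ)) * ∑ s, g (Z s))

namespace zetaAux
variable {p T : ℕ} (Z : Fin T → (Fin p → ℝ)) (f g g' : (Fin p → ℝ) → ℝ)

lemma symm : zetaCov p T Z f g = zetaCov p T Z g f := by
  unfold zetaCov; congr 1; exact Finset.sum_congr rfl fun t _ => mul_comm _ _

lemma add_right : zetaCov p T Z f (g + g') = zetaCov p T Z f g + zetaCov p T Z f g' := by
  unfold zetaCov
  rw [← mul_add, ← Finset.sum_add_distrib]
  congr 1
  refine Finset.sum_congr rfl fun t _ => ?_
  simp only [Pi.add_apply, Finset.sum_add_distrib]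
  ring

lemma smul_right (c : ℝ) : zetaCov p T Z f (c • g) = c * zetaCov p T Z f g := by
  unfold zetaCov
  have key : ∀ t : Fin T, (f (Z t) - (1 / (T : ℝ)) * ∑ s, f (Z s))
      * ((c • g) (Z t) - (1 / (T : ℝ)) * ∑ s, (c • g) (Z s))
      = c * ((f (Z t) - (1 / (T : ℝ)) * ∑ s, f (Z s))
          * (g (Z t) - (1 / (T : ℝ)) * ∑ s, g (Z s))) := by
    intro t
    simp only [Pi.smul_apply, smul_eq_mul, ← Finset.mul_sum]
    ring
  rw [Finset.sum_congr rfl (fun t _ => key t), ← Finset.mul_sum]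
  ring

lemma nonneg : 0 ≤ zetaCov p T Z g g := by
  unfold zetaCov
  apply mul_nonneg (by positivity)
  exact Finset.sum_nonneg fun t _ => mul_self_nonneg _

lemma aux_cs (a b : Fin T → ℝ) :
    ((1 / (T : ℝ)) * ∑ t, a t * b t) ^ 2
      ≤ ((1 / (T : ℝ)) * ∑ t, a t * a t) * ((1 / (T : ℝ)) * ∑ t, b t * b t) := by
  rw [mul_pow, mul_mul_mul_comm, ← sq]
  refine mul_le_mul_of_nonneg_left ?_ (by positivity)
  have h := Finset.sum_mul_sq_le_sq_mul_sq Finset.univ a b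
  calc (∑ t, a t * b t) ^ 2 ≤ (∑ t, (a t) ^ 2) * ∑ t, (b t) ^ 2 := h
    _ = (∑ t, a t * a t) * ∑ t, b t * b t := by
        congr 1 <;> exact Finset.sum_congr rfl fun t _ => by ring

lemma sq_le : (zetaCov p T Z f g) ^ 2 ≤ zetaCov p T Z f f * zetaCov p T Z g g :=
  aux_cs _ _

lemma self_le (hT : 1 ≤ T) {C : ℝ} (hC : ∀ z, |f z| ≤ C) : zetaCov p T Z f f ≤ 4 * C ^ 2 := by
  have hT0 : (0:ℝ) < T := by exact_mod_cast hT
  have hC0 : 0 ≤ C := le_trans (abs_nonneg _) (hC (Z ⟨0, hT⟩))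
  have key : ∀ t : Fin T, (f (Z t) - (1 / (T : ℝ)) * ∑ s, f (Z s))
      * (f (Z t) - (1 / (T : ℝ)) * ∑ s, f (Z s)) ≤ 4 * C ^ 2 := by
    intro t
    have h1 : |(1 / (T : ℝ)) * ∑ s, f (Z s)| ≤ C := by
      rw [abs_mul, abs_of_nonneg (by positivity : (0:ℝ) ≤ 1 / (T:ℝ))]
      have h2 : |∑ s, f (Z s)| ≤ (T : ℝ) * C := by
        refine le_trans (Finset.abs_sum_le_sum_abs _ _) ?_
        calc ∑ s : Fin T, |f (Z s)| ≤ ∑ _s : Fin T, C :=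
              Finset.sum_le_sum fun s _ => hC _
          _ = (T : ℝ) * C := by simp [mul_comm]
      calc (1 / (T : ℝ)) * |∑ s, f (Z s)| ≤ (1 / (T : ℝ)) * ((T : ℝ) * C) := by
            exact mul_le_mul_of_nonneg_left h2 (by positivity)
        _ = C := by field_simp
    have habs : |f (Z t) - (1 / (T : ℝ)) * ∑ s, f (Z s)| ≤ 2 * C := by
      calc |f (Z t) - (1 / (T : ℝ)) * ∑ s, f (Z s)|
          ≤ |f (Z t)| + |(1 / (T : ℝ)) * ∑ s, f (Z s)| := abs_sub _ _
        _ ≤ C + C := add_le_add (hC _) h1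
        _ = 2 * C := by ring
    calc (f (Z t) - (1 / (T : ℝ)) * ∑ s, f (Z s)) * (f (Z t) - (1 / (T : ℝ)) * ∑ s, f (Z s))
        = |f (Z t) - (1 / (T : ℝ)) * ∑ s, f (Z s)| ^ 2 := by rw [sq_abs]; ring
      _ ≤ (2 * C) ^ 2 := by
          exact pow_le_pow_left₀ (abs_nonneg _) habs 2
      _ = 4 * C ^ 2 := by ring
  unfold zetaCov
  calc (1 / (T : ℝ)) * ∑ t, (f (Z t) - (1 / (T : ℝ)) * ∑ s, f (Z s))
      * (f (Z t) - (1 / (T : ℝ)) * ∑ s, f (Z s))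
      ≤ (1 / (T : ℝ)) * ∑ _t : Fin T, (4 * C ^ 2) :=
        mul_le_mul_of_nonneg_left (Finset.sum_le_sum fun t _ => key t) (by positivity)
    _ = 4 * C ^ 2 := by
        rw [Finset.sum_const]
        simp only [Finset.card_univ, Fintype.card_fin, nsmul_eq_mul]
        field_simp

lemma abs_le (hT : 1 ≤ T) {Cf Cg : ℝ} (hCf : ∀ z, |f z| ≤ Cf) (hCg : ∀ z, |g z| ≤ Cg) :
    |zetaCov p T Z f g| ≤ 4 * Cf * Cg := by
  have hCf0 : 0 ≤ Cf := le_trans (abs_nonneg _) (hCf (Z ⟨0, hT⟩))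
  have hCg0 : 0 ≤ Cg := le_trans (abs_nonneg _) (hCg (Z ⟨0, hT⟩))
  have h := sq_le Z f g
  have h2 : (zetaCov p T Z f g) ^ 2 ≤ (4 * Cf * Cg) ^ 2 := by
    calc (zetaCov p T Z f g) ^ 2 ≤ zetaCov p T Z f f * zetaCov p T Z g g := h
      _ ≤ (4 * Cf ^ 2) * (4 * Cg ^ 2) :=
          mul_le_mul (self_le Z f hT hCf) (self_le Z g hT hCg) (nonneg Z g) (by positivity)
      _ = (4 * Cf * Cg) ^ 2 := by ring
  exact abs_le_of_sq_le_sq h2 (by positivity)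



lemma measurable_zeta {p T : ℕ} {f g : (Fin p → ℝ) → ℝ}
    (hf : Measurable f) (hg : Measurable g) :
    Measurable (fun Z : Fin T → (Fin p → ℝ) => zetaCov p T Z f g) := by
  unfold zetaCov
  apply Measurable.const_mul
  apply Finset.measurable_sum
  intro t _
  apply Measurable.mul
  · exact (hf.comp (measurable_pi_apply t)).sub
      ((Finset.measurable_sum _ fun s _ => hf.comp (measurable_pi_apply s)).const_mul _)
  · exact (hg.comp (measurable_pi_apply t)).sub
      ((Finset.measurable_sum _ fun s _ => hg.comp (measurable_pi_apply s)).const_mul _)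

lemma integrable_of_bdd {Ω : Type*} [MeasurableSpace Ω] {μ : Measure Ω}
    [IsProbabilityMeasure μ] {F : Ω → ℝ} {C : ℝ} (hm : Measurable F)
    (hb : ∀ ω, |F ω| ≤ C) : Integrable F μ := by
  refine Integrable.mono' (integrable_const C) hm.aestronglyMeasurable ?_
  exact Filter.Eventually.of_forall fun ω => by simpa [Real.norm_eq_abs] using hb ω

/-- Abstract Cauchy–Schwarz step. -/
lemma sup_ratio_le {E : Type*} [NormedAddCommGroup E] [InnerProductSpace ℝ E]
    {d : ℕ} (b : OrthonormalBasis (Fin d) ℝ E) (φ : E →ₗ[ℝ] ℝ) (x : E) :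
    (φ x) ^ 2 / (inner ℝ x x : ℝ) ≤ ∑ j, (φ (b j)) ^ 2 := by
  rcases eq_or_ne x 0 with rfl | hx
  · simp
    positivity
  · have hxx : (0:ℝ) < inner ℝ x x := by
      rw [real_inner_self_eq_norm_sq]
      exact pow_pos (norm_pos_iff.mpr hx) 2
    rw [div_le_iff₀ hxx]
    have hrepr : φ x = ∑ j, (inner ℝ (b j) x : ℝ) * φ (b j) := by
      conv_lhs => rw [← b.sum_repr x]
      rw [map_sum]
      refine Finset.sum_congr rfl fun j _ => ?_
      rw [LinearMap.map_smul, b.repr_apply_apply]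
      simp [smul_eq_mul]
    have hx2 : (inner ℝ x x : ℝ) = ∑ j, (inner ℝ (b j) x : ℝ) ^ 2 := by
      have := b.sum_inner_mul_inner x x
      rw [← this]
      refine (Finset.sum_congr rfl fun j _ => ?_).symm
      rw [real_inner_comm x (b j)]
      ring
    calc (φ x) ^ 2 = (∑ j, (inner ℝ (b j) x : ℝ) * φ (b j)) ^ 2 := by rw [hrepr]
      _ ≤ (∑ j, (inner ℝ (b j) x : ℝ) ^ 2) * ∑ j, (φ (b j)) ^ 2 :=
          Finset.sum_mul_sq_le_sq_mul_sq _ _ _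
      _ = (∑ j, (φ (b j)) ^ 2) * (inner ℝ x x : ℝ) := by rw [hx2]; ring

end zetaAux

/-- If W₁,…,W_N are independent panel observations, Θ is a d-dimensional subspace of
bounded measurable functions on which the population inner product
⟨f,g⟩ = E[(1/N)Σ_i ζ_i(f,g)] is an inner product, and v is bounded measurable with
|v| ≤ Cv, then E[ sup_{g ∈ Θ, g ≠ 0} |⟨v,g⟩_{NT} − ⟨v,g⟩|²/‖g‖² ] ≤ 4·Cv²·d/N. -/
theorem expected_sup_empirical_inner_deviation
    {Ω : Type*} [MeasurableSpace Ω] (μ : Measure Ω) [IsProbabilityMeasure μ]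
    (p T N d : ℕ) (hp : 1 ≤ p) (hT : 1 ≤ T) (hN : 1 ≤ N) (hd : 1 ≤ d)
    (W : Fin N → Ω → (Fin T → (Fin p → ℝ)))
    (hWm : ∀ i, Measurable (W i))
    (hWindep : ProbabilityTheory.iIndepFun W μ)
    (Θ : Submodule ℝ ((Fin p → ℝ) → ℝ))
    (hΘmeas : ∀ g ∈ Θ, Measurable g)
    (hΘbdd : ∀ g ∈ Θ, ∃ C : ℝ, ∀ z, |g z| ≤ C)
    (hΘdim : Module.finrank ℝ Θ = d)
    (hinner : ∀ g ∈ Θ, g ≠ 0 →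
      0 < ∫ ω, (1 / (N : ℝ)) * ∑ i, zetaCov p T (W i ω) g g ∂μ)
    (v : (Fin p → ℝ) → ℝ) (hvm : Measurable v) (Cv : ℝ) (hCv : ∀ z, |v z| ≤ Cv)
    (hsupmeas : Measurable (fun ω =>
      ⨆ g : {g : Θ // g ≠ 0},
        |((1 / (N : ℝ)) * ∑ i, zetaCov p T (W i ω) v (g.1 : (Fin p → ℝ) → ℝ))
            - ∫ ω', (1 / (N : ℝ)) * ∑ i,
                zetaCov p T (W i ω') v (g.1 : (Fin p → ℝ) → ℝ) ∂μ| ^ 2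
          / ∫ ω', (1 / (N : ℝ)) * ∑ i,
              zetaCov p T (W i ω') (g.1 : (Fin p → ℝ) → ℝ)
                (g.1 : (Fin p → ℝ) → ℝ) ∂μ)) :
    ∫ ω, (⨆ g : {g : Θ // g ≠ 0},
        |((1 / (N : ℝ)) * ∑ i, zetaCov p T (W i ω) v (g.1 : (Fin p → ℝ) → ℝ))
            - ∫ ω', (1 / (N : ℝ)) * ∑ i,
                zetaCov p T (W i ω') v (g.1 : (Fin p → ℝ) → ℝ) ∂μ| ^ 2
          / ∫ ω', (1 / (N : ℝ)) * ∑ i,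
              zetaCov p T (W i ω') (g.1 : (Fin p → ℝ) → ℝ)
                (g.1 : (Fin p → ℝ) → ℝ) ∂μ) ∂μ
      ≤ 4 * Cv ^ 2 * d / N := by
  classical
  have hN0 : (0:ℝ) < N := by exact_mod_cast hN
  have hCv0 : 0 ≤ Cv := le_trans (abs_nonneg _) (hCv 0)
  have hvbdd : ∃ C : ℝ, ∀ z, |v z| ≤ C := ⟨Cv, hCv⟩
  -- the empirical inner product
  set S : ((Fin p → ℝ) → ℝ) → ((Fin p → ℝ) → ℝ) → Ω → ℝ :=
    fun f g ω => (1 / (N : ℝ)) * ∑ i, zetaCov p T (W i ω) f g with hS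
  -- measurability of the empirical inner product
  have hSmeas : ∀ (f g : (Fin p → ℝ) → ℝ), Measurable f → Measurable g →
      Measurable (S f g) := by
    intro f g hf hg
    exact ((Finset.measurable_sum _ fun i _ =>
      (zetaAux.measurable_zeta hf hg).comp (hWm i))).const_mul _
  -- uniform bound on the empirical inner product
  have hSbdd : ∀ (f g : (Fin p → ℝ) → ℝ) (Cf Cg : ℝ), (∀ z, |f z| ≤ Cf) →
      (∀ z, |g z| ≤ Cg) → ∀ ω, |S f g ω| ≤ 4 * Cf * Cg := by
    intro f g Cf Cg hCf hCg ω
    rw [hS]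
    simp only
    rw [abs_mul, abs_of_nonneg (by positivity : (0:ℝ) ≤ 1 / (N:ℝ))]
    calc (1 / (N:ℝ)) * |∑ i, zetaCov p T (W i ω) f g|
        ≤ (1 / (N:ℝ)) * ((N:ℝ) * (4 * Cf * Cg)) := by
          refine mul_le_mul_of_nonneg_left ?_ (by positivity)
          refine le_trans (Finset.abs_sum_le_sum_abs _ _) ?_
          calc ∑ i : Fin N, |zetaCov p T (W i ω) f g|
              ≤ ∑ _i : Fin N, (4 * Cf * Cg) :=
                Finset.sum_le_sum fun i _ => zetaAux.abs_le _ _ _ hT hCf hCg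
            _ = (N:ℝ) * (4 * Cf * Cg) := by simp [mul_comm]
      _ = 4 * Cf * Cg := by field_simp
  -- integrability
  have hSint : ∀ (f g : (Fin p → ℝ) → ℝ), Measurable f → Measurable g →
      (∃ C, ∀ z, |f z| ≤ C) → (∃ C, ∀ z, |g z| ≤ C) → Integrable (S f g) μ := by
    rintro f g hf hg ⟨Cf, hCf⟩ ⟨Cg, hCg⟩
    exact zetaAux.integrable_of_bdd (hSmeas f g hf hg) (hSbdd f g Cf Cg hCf hCg)
  -- the population inner product
  set ip : ((Fin p → ℝ) → ℝ) → ((Fin p → ℝ) → ℝ) → ℝ :=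
    fun f g => ∫ ω, S f g ω ∂μ with hip
  -- pointwise linearity of S in the second argument
  have hSadd : ∀ (f g g' : (Fin p → ℝ) → ℝ) ω, S f (g + g') ω = S f g ω + S f g' ω := by
    intro f g g' ω
    rw [hS]
    simp only [zetaAux.add_right, Finset.sum_add_distrib, mul_add]
  have hSsmul : ∀ (f g : (Fin p → ℝ) → ℝ) (c : ℝ) ω, S f (c • g) ω = c * S f g ω := by
    intro f g c ω
    rw [hS]
    simp only [zetaAux.smul_right, ← Finset.mul_sum]
    ring
  have hSsymm : ∀ (f g : (Fin p → ℝ) → ℝ) ω, S f g ω = S g f ω := by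
    intro f g ω
    rw [hS]
    simp only [zetaAux.symm]
  have hSnonneg : ∀ (g : (Fin p → ℝ) → ℝ) ω, 0 ≤ S g g ω := by
    intro g ω
    rw [hS]
    simp only
    exact mul_nonneg (by positivity) (Finset.sum_nonneg fun i _ => zetaAux.nonneg _ _)
  have hipnonneg : ∀ (g : (Fin p → ℝ) → ℝ), 0 ≤ ip g g := fun g =>
    integral_nonneg (hSnonneg g)
  -- boundedness data for elements of Θ
  have hmem : ∀ x : Θ, (x : (Fin p → ℝ) → ℝ) ∈ Θ := fun x => x.2
  have hΘm : ∀ x : Θ, Measurable (x : (Fin p → ℝ) → ℝ) := fun x => hΘmeas _ x.2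
  have hΘb : ∀ x : Θ, ∃ C, ∀ z, |(x : (Fin p → ℝ) → ℝ) z| ≤ C := fun x => hΘbdd _ x.2
  -- the inner product core on Θ
  letI core : InnerProductSpace.Core ℝ Θ :=
    { inner := fun x y => ip (x : (Fin p → ℝ) → ℝ) (y : (Fin p → ℝ) → ℝ)
      conj_inner_symm := by
        intro x y
        simp only [starRingEnd_apply, star_trivial]
        rw [hip]
        exact integral_congr_ae (Filter.Eventually.of_forall fun ω => hSsymm _ _ ω)
      re_inner_nonneg := by
        intro x
        simpa using hipnonneg (x : (Fin p → ℝ) → ℝ)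
      add_left := by
        intro x y z
        simp only [Submodule.coe_add]
        rw [hip]
        simp only
        have h1 : ∀ ω, S (↑x + ↑y) (↑z) ω = S (↑z) (↑x) ω + S (↑z) (↑y) ω := by
          intro ω
          rw [hSsymm, hSadd]
        rw [integral_congr_ae (Filter.Eventually.of_forall h1), integral_add
            (hSint _ _ (hΘm z) (hΘm x) (hΘb z) (hΘb x))
            (hSint _ _ (hΘm z) (hΘm y) (hΘb z) (hΘb y))]
        congr 1
        · exact integral_congr_ae (Filter.Eventually.of_forall fun ω => (hSsymm _ _ ω).symm)
        · exact integral_congr_ae (Filter.Eventually.of_forall fun ω => (hSsymm _ _ ω).symm)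
      smul_left := by
        intro x y r
        simp only [starRingEnd_apply, star_trivial, Submodule.coe_smul]
        rw [hip]
        simp only
        have h1 : ∀ ω, S (r • (x : (Fin p → ℝ) → ℝ)) (↑y) ω = r * S (↑x) (↑y) ω := by
          intro ω
          rw [hSsymm, hSsmul, hSsymm]
        rw [integral_congr_ae (Filter.Eventually.of_forall h1), integral_const_mul]
      definite := by
        intro x hx
        by_contra hx0
        have hx0' : (x : (Fin p → ℝ) → ℝ) ≠ 0 := by
          simpa [Submodule.coe_eq_zero] using hx0
        exact absurd hx (ne_of_gt (hinner _ x.2 hx0'))  }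
  -- instances
  letI : NormedAddCommGroup Θ := core.toNormedAddCommGroup
  letI : InnerProductSpace ℝ Θ := InnerProductSpace.ofCore core.toCore
  haveI : FiniteDimensional ℝ Θ :=
    FiniteDimensional.of_finrank_pos (by rw [hΘdim]; exact hd)
  haveI : Nontrivial Θ :=
    Module.nontrivial_of_finrank_pos (R := ℝ) (by rw [hΘdim]; exact hd)
  let b : OrthonormalBasis (Fin d) ℝ Θ :=
    (stdOrthonormalBasis ℝ Θ).reindex (finCongr hΘdim)
  have hinnerdef : ∀ x y : Θ, (inner ℝ x y : ℝ) = ip (x : (Fin p → ℝ) → ℝ) (y : (Fin p → ℝ) → ℝ) :=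
    fun x y => rfl
  have hbnorm : ∀ j, ip ((b j : Θ) : (Fin p → ℝ) → ℝ) ((b j : Θ) : (Fin p → ℝ) → ℝ) = 1 := by
    intro j
    rw [← hinnerdef]
    have h1 : ‖b j‖ = 1 := b.orthonormal.1 j
    rw [real_inner_self_eq_norm_sq, h1]
    norm_num
  -- linearity of ip v in the second argument
  have hipadd : ∀ x y : Θ, ip v ((x : (Fin p → ℝ) → ℝ) + y) = ip v x + ip v y := by
    intro x y
    rw [hip]
    simp only
    rw [integral_congr_ae (Filter.Eventually.of_forall fun ω => hSadd v x y ω),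
      integral_add (hSint _ _ hvm (hΘm x) hvbdd (hΘb x))
        (hSint _ _ hvm (hΘm y) hvbdd (hΘb y))]
  have hipsmul : ∀ (c : ℝ) (x : Θ), ip v (c • (x : (Fin p → ℝ) → ℝ)) = c * ip v x := by
    intro c x
    rw [hip]
    simp only
    rw [integral_congr_ae (Filter.Eventually.of_forall fun ω => hSsmul v x c ω),
      integral_const_mul]
  -- the deviation functional, as a linear map on Θ, for each ω
  let φ : Ω → Θ →ₗ[ℝ] ℝ := fun ω =>
    { toFun := fun x => S v (x : (Fin p → ℝ) → ℝ) ω - ip v (x : (Fin p → ℝ) → ℝ)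
      map_add' := by
        intro x y
        simp only [Submodule.coe_add]
        rw [hSadd, hipadd]
        ring
      map_smul' := by
        intro c x
        simp only [Submodule.coe_smul, RingHom.id_apply, smul_eq_mul]
        rw [hSsmul, hipsmul]
        ring }
  -- pointwise bound on the supremum
  have hub : ∀ (ω : Ω) (g : {g : Θ // g ≠ 0}),
      |S v ((g.1 : Θ) : (Fin p → ℝ) → ℝ) ω - ip v ((g.1 : Θ) : (Fin p → ℝ) → ℝ)| ^ 2
        / ip ((g.1 : Θ) : (Fin p → ℝ) → ℝ) ((g.1 : Θ) : (Fin p → ℝ) → ℝ)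
      ≤ ∑ j, (S v ((b j : Θ) : (Fin p → ℝ) → ℝ) ω - ip v ((b j : Θ) : (Fin p → ℝ) → ℝ)) ^ 2 := by
    intro ω g
    have h := zetaAux.sup_ratio_le b (φ ω) g.1
    rw [sq_abs]
    exact h
  -- bound on |ip v e|
  have hipabs : ∀ (e : (Fin p → ℝ) → ℝ) (Ce : ℝ), Measurable e → (∀ z, |e z| ≤ Ce) →
      |ip v e| ≤ 4 * Cv * Ce := by
    intro e Ce he hCe
    rw [hip]
    simp only
    calc |∫ ω, S v e ω ∂μ| ≤ ∫ ω, |S v e ω| ∂μ := by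
          simpa [Real.norm_eq_abs] using norm_integral_le_integral_norm (μ := μ) (fun ω => S v e ω)
      _ ≤ ∫ _ω, (4 * Cv * Ce) ∂μ := by
          refine integral_mono ((hSint v e hvm he hvbdd ⟨Ce, hCe⟩).abs) (integrable_const _) ?_
          intro ω
          exact hSbdd v e Cv Ce hCv hCe ω
      _ = 4 * Cv * Ce := by simp
  -- the variance bound
  have key : ∀ (e : (Fin p → ℝ) → ℝ) (Ce : ℝ), Measurable e → (∀ z, |e z| ≤ Ce) →
      ∫ ω, (S v e ω - ip v e) ^ 2 ∂μ ≤ 4 * Cv ^ 2 / N * ip e e := by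
    intro e Ce he hCe
    have hCe0 : 0 ≤ Ce := le_trans (abs_nonneg _) (hCe 0)
    -- per-individual pieces
    set c : Fin N → ℝ := fun i => ∫ ω, zetaCov p T (W i ω) v e ∂μ with hc
    set X : Fin N → Ω → ℝ := fun i ω => zetaCov p T (W i ω) v e - c i with hX
    have hzm : ∀ i, Measurable (fun ω => zetaCov p T (W i ω) v e) := fun i =>
      (zetaAux.measurable_zeta hvm he).comp (hWm i)
    have hzb : ∀ i ω, |zetaCov p T (W i ω) v e| ≤ 4 * Cv * Ce := fun i ω =>
      zetaAux.abs_le _ _ _ hT hCv hCe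
    have hzint : ∀ i, Integrable (fun ω => zetaCov p T (W i ω) v e) μ := fun i =>
      zetaAux.integrable_of_bdd (hzm i) (hzb i)
    have hcb : ∀ i, |c i| ≤ 4 * Cv * Ce := by
      intro i
      rw [hc]
      calc |∫ ω, zetaCov p T (W i ω) v e ∂μ| ≤ ∫ ω, |zetaCov p T (W i ω) v e| ∂μ := by
            simpa [Real.norm_eq_abs] using
              norm_integral_le_integral_norm (μ := μ) (fun ω => zetaCov p T (W i ω) v e)
        _ ≤ ∫ _ω, (4 * Cv * Ce) ∂μ :=
            integral_mono ((hzint i).abs) (integrable_const _) (fun ω => hzb i ω)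
        _ = 4 * Cv * Ce := by simp
    have hXm : ∀ i, Measurable (X i) := fun i => (hzm i).sub measurable_const
    have hXb : ∀ i ω, |X i ω| ≤ 8 * Cv * Ce := by
      intro i ω
      rw [hX]
      calc |zetaCov p T (W i ω) v e - c i| ≤ |zetaCov p T (W i ω) v e| + |c i| := abs_sub _ _
        _ ≤ 4 * Cv * Ce + 4 * Cv * Ce := add_le_add (hzb i ω) (hcb i)
        _ = 8 * Cv * Ce := by ring
    have hXint : ∀ i, Integrable (X i) μ := fun i =>
      zetaAux.integrable_of_bdd (hXm i) (hXb i)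
    have hX0 : ∀ i, ∫ ω, X i ω ∂μ = 0 := by
      intro i
      rw [hX]
      simp only
      rw [integral_sub (hzint i) (integrable_const _), integral_const]
      simp [hc]
    have hXXint : ∀ i k, Integrable (fun ω => X i ω * X k ω) μ := by
      intro i k
      refine zetaAux.integrable_of_bdd ((hXm i).mul (hXm k)) (C := (8*Cv*Ce) * (8*Cv*Ce)) ?_
      intro ω
      rw [abs_mul]
      exact mul_le_mul (hXb i ω) (hXb k ω) (abs_nonneg _) (by positivity)
    -- the deviation as an average of independent centered terms
    have hdiff : ∀ ω, S v e ω - ip v e = (1 / (N:ℝ)) * ∑ i, X i ω := by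
      intro ω
      have h1 : ip v e = (1 / (N:ℝ)) * ∑ i, c i := by
        rw [hip, hS]
        simp only
        rw [integral_const_mul, integral_finset_sum _ (fun i _ => hzint i)]
      rw [h1, hS]
      simp only [hX]
      rw [Finset.sum_sub_distrib, mul_sub]
    -- expectation of cross terms
    have hcross : ∀ i k, i ≠ k → ∫ ω, X i ω * X k ω ∂μ = 0 := by
      intro i k hik
      have hYm : ∀ l, Measurable (fun w : Fin T → (Fin p → ℝ) => zetaCov p T w v e - c l) :=
        fun l => (zetaAux.measurable_zeta hvm he).sub measurable_const
      have hindep : ProbabilityTheory.IndepFun (X i) (X k) μ :=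
        ProbabilityTheory.IndepFun.comp (hWindep.indepFun hik) (hYm i) (hYm k)
      have hmul := hindep.integral_mul_eq_mul_integral (hXint i).aestronglyMeasurable (hXint k).aestronglyMeasurable
      have heq : (fun ω => X i ω * X k ω) = X i * X k := rfl
      rw [heq]
      rw [hmul, hX0 i, hX0 k]
      ring
    -- expectation of diagonal terms
    have hzzm : ∀ i, Measurable (fun ω => zetaCov p T (W i ω) e e) := fun i =>
      (zetaAux.measurable_zeta he he).comp (hWm i)
    have hzzint : ∀ i, Integrable (fun ω => zetaCov p T (W i ω) e e) μ := fun i =>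
      zetaAux.integrable_of_bdd (hzzm i) (fun ω => zetaAux.abs_le _ _ _ hT hCe hCe)
    have hdiag : ∀ i, ∫ ω, X i ω * X i ω ∂μ
        ≤ 4 * Cv ^ 2 * ∫ ω, zetaCov p T (W i ω) e e ∂μ := by
      intro i
      have hsqint : Integrable (fun ω => zetaCov p T (W i ω) v e ^ 2) μ := by
        refine zetaAux.integrable_of_bdd ((hzm i).pow_const 2) (C := (4*Cv*Ce)^2) ?_
        intro ω
        rw [abs_pow]
        exact pow_le_pow_left₀ (abs_nonneg _) (hzb i ω) 2
      have hexp : ∀ ω, X i ω * X i ω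
          = zetaCov p T (W i ω) v e ^ 2 - 2 * c i * zetaCov p T (W i ω) v e + c i ^ 2 := by
        intro ω
        rw [hX]
        ring
      rw [integral_congr_ae (Filter.Eventually.of_forall hexp)]
      have e1 : ∫ ω, (zetaCov p T (W i ω) v e ^ 2 - 2 * c i * zetaCov p T (W i ω) v e
            + c i ^ 2) ∂μ
          = (∫ ω, zetaCov p T (W i ω) v e ^ 2 ∂μ)
            - 2 * c i * (∫ ω, zetaCov p T (W i ω) v e ∂μ) + c i ^ 2 := by
        have h2 : Integrable (fun ω => 2 * c i * zetaCov p T (W i ω) v e) μ :=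
          (hzint i).const_mul (2 * c i)
        have h1 : Integrable (fun ω => zetaCov p T (W i ω) v e ^ 2
            - 2 * c i * zetaCov p T (W i ω) v e) μ := hsqint.sub h2
        rw [integral_add h1 (integrable_const _), integral_sub hsqint h2, integral_const_mul,
          integral_const]
        simp
      have hci : ∫ ω, zetaCov p T (W i ω) v e ∂μ = c i := rfl
      rw [show (2 : ℝ) * c i = 2 * c i from rfl] at e1
      rw [e1, hci]
      have hptw : ∫ ω, zetaCov p T (W i ω) v e ^ 2 ∂μ
          ≤ ∫ ω, 4 * Cv ^ 2 * zetaCov p T (W i ω) e e ∂μ := by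
        refine integral_mono hsqint ((hzzint i).const_mul _) ?_
        intro ω
        calc zetaCov p T (W i ω) v e ^ 2
            ≤ zetaCov p T (W i ω) v v * zetaCov p T (W i ω) e e := zetaAux.sq_le _ _ _
          _ ≤ 4 * Cv ^ 2 * zetaCov p T (W i ω) e e := by
              refine mul_le_mul_of_nonneg_right ?_ (zetaAux.nonneg _ _)
              exact zetaAux.self_le _ _ hT hCv
      rw [integral_const_mul] at hptw
      nlinarith [sq_nonneg (c i)]
    -- put it together
    have hsum : ∫ ω, (S v e ω - ip v e) ^ 2 ∂μ
        = (1 / (N:ℝ)) ^ 2 * ∑ i, ∑ k, ∫ ω, X i ω * X k ω ∂μ := by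
      have h2 : ∀ ω, (S v e ω - ip v e) ^ 2
          = (1 / (N:ℝ)) ^ 2 * ∑ i, ∑ k, X i ω * X k ω := by
        intro ω
        rw [hdiff ω, mul_pow]
        congr 1
        rw [pow_two, Finset.sum_mul_sum]
      rw [integral_congr_ae (Filter.Eventually.of_forall h2), integral_const_mul]
      congr 1
      rw [integral_finset_sum _ (fun i _ => integrable_finset_sum _ (fun k _ => hXXint i k))]
      exact Finset.sum_congr rfl fun i _ =>
        (integral_finset_sum _ (fun k _ => hXXint i k))
    have hdiagsum : ∑ i, ∑ k, ∫ ω, X i ω * X k ω ∂μ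
        ≤ 4 * Cv ^ 2 * ∑ i, ∫ ω, zetaCov p T (W i ω) e e ∂μ := by
      rw [Finset.mul_sum]
      refine Finset.sum_le_sum fun i _ => ?_
      rw [Finset.sum_eq_single i (fun k _ hk => hcross i k (Ne.symm hk)) (by simp)]
      exact hdiag i
    have hipee : ∑ i, ∫ ω, zetaCov p T (W i ω) e e ∂μ = (N:ℝ) * ip e e := by
      rw [hip, hS]
      simp only
      rw [integral_const_mul, integral_finset_sum _ (fun i _ => hzzint i)]
      field_simp
    rw [hsum]
    calc (1 / (N:ℝ)) ^ 2 * ∑ i, ∑ k, ∫ ω, X i ω * X k ω ∂μ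
        ≤ (1 / (N:ℝ)) ^ 2 * (4 * Cv ^ 2 * ((N:ℝ) * ip e e)) := by
          refine mul_le_mul_of_nonneg_left ?_ (by positivity)
          rw [← hipee]
          exact hdiagsum
      _ = 4 * Cv ^ 2 / N * ip e e := by field_simp
  -- nonemptiness of the index type
  haveI hne : Nonempty {g : Θ // g ≠ 0} := by
    obtain ⟨x, hx⟩ := exists_ne (0 : Θ)
    exact ⟨⟨x, hx⟩⟩
  -- integrability and bound for each basis element
  have hjint : ∀ j : Fin d, Integrable
      (fun ω => (S v ((b j : Θ) : (Fin p → ℝ) → ℝ) ω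
        - ip v ((b j : Θ) : (Fin p → ℝ) → ℝ)) ^ 2) μ := by
    intro j
    obtain ⟨Ce, hCe⟩ := hΘb (b j)
    have hCe0 : 0 ≤ Ce := le_trans (abs_nonneg _) (hCe 0)
    refine zetaAux.integrable_of_bdd (C := (8 * Cv * Ce) ^ 2)
      (((hSmeas v _ hvm (hΘm (b j))).sub measurable_const).pow_const 2) ?_
    intro ω
    rw [abs_pow]
    refine pow_le_pow_left₀ (abs_nonneg _) ?_ 2
    calc |S v ((b j : Θ) : (Fin p → ℝ) → ℝ) ω - ip v ((b j : Θ) : (Fin p → ℝ) → ℝ)|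
        ≤ |S v ((b j : Θ) : (Fin p → ℝ) → ℝ) ω| + |ip v ((b j : Θ) : (Fin p → ℝ) → ℝ)| :=
          abs_sub _ _
      _ ≤ 4 * Cv * Ce + 4 * Cv * Ce :=
          add_le_add (hSbdd v _ Cv Ce hCv hCe ω) (hipabs _ Ce (hΘm (b j)) hCe)
      _ = 8 * Cv * Ce := by ring
  have hjbound : ∀ j : Fin d,
      ∫ ω, (S v ((b j : Θ) : (Fin p → ℝ) → ℝ) ω
        - ip v ((b j : Θ) : (Fin p → ℝ) → ℝ)) ^ 2 ∂μ ≤ 4 * Cv ^ 2 / N := by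
    intro j
    obtain ⟨Ce, hCe⟩ := hΘb (b j)
    have h := key ((b j : Θ) : (Fin p → ℝ) → ℝ) Ce (hΘm (b j)) hCe
    rwa [hbnorm j, mul_one] at h
  -- conclusion
  calc ∫ ω, (⨆ g : {g : Θ // g ≠ 0},
        |((1 / (N : ℝ)) * ∑ i, zetaCov p T (W i ω) v (g.1 : (Fin p → ℝ) → ℝ))
            - ∫ ω', (1 / (N : ℝ)) * ∑ i,
                zetaCov p T (W i ω') v (g.1 : (Fin p → ℝ) → ℝ) ∂μ| ^ 2
          / ∫ ω', (1 / (N : ℝ)) * ∑ i,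
              zetaCov p T (W i ω') (g.1 : (Fin p → ℝ) → ℝ)
                (g.1 : (Fin p → ℝ) → ℝ) ∂μ) ∂μ
      ≤ ∫ ω, (∑ j, (S v ((b j : Θ) : (Fin p → ℝ) → ℝ) ω
          - ip v ((b j : Θ) : (Fin p → ℝ) → ℝ)) ^ 2) ∂μ := by
        refine integral_mono_of_nonneg ?_ (integrable_finset_sum _ (fun j _ => hjint j)) ?_
        · refine Filter.Eventually.of_forall fun ω => ?_
          refine Real.iSup_nonneg fun g => ?_
          refine div_nonneg (by positivity) ?_
          exact hipnonneg ((g.1 : Θ) : (Fin p → ℝ) → ℝ)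
        · refine Filter.Eventually.of_forall fun ω => ?_
          exact ciSup_le fun g => hub ω g
    _ = ∑ j, ∫ ω, (S v ((b j : Θ) : (Fin p → ℝ) → ℝ) ω
          - ip v ((b j : Θ) : (Fin p → ℝ) → ℝ)) ^ 2 ∂μ :=
        integral_finset_sum _ (fun j _ => hjint j)
    _ ≤ ∑ _j : Fin d, (4 * Cv ^ 2 / N) := Finset.sum_le_sum fun j _ => hjbound j
    _ = 4 * Cv ^ 2 * d / N := by
        rw [Finset.sum_const]
        simp only [Finset.card_univ, Fintype.card_fin, nsmul_eq_mul]
        ring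
end
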